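/- arXiv:0806.2495 — 9 statements merged into one kernel-verified Lean document; each statement's English description precedes it below -/
import Mathlib

section
/- For points A1=(x1,y1), A2=(x2,y2), A3=(x3,y3) in F² over a field F of characteristic ≠ 2, with quadrances Q1 = Q(A2,A3), Q2 = Q(A1,A3), Q3 = Q(A1,A2), the three points are collinear if and only if (Q1+Q2+Q3)² = 2(Q1²+Q2²+Q3²). -/
/-- The quadrance between two points of `F × F`. -/
def quadrance {F : Type*} [Field F] (A B : F × F) : F :=
  (B.1 - A.1) ^ 2 + (B.2 - A.2) ^ 2

/-- Three points are collinear when they lie on a common line `a*x + b*y + c = 0`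
with `(a, b) ≠ (0, 0)`. -/
def CollinearPts {F : Type*} [Field F] (A1 A2 A3 : F × F) : Prop :=
  ∃ a b c : F, ¬(a = 0 ∧ b = 0) ∧
    a * A1.1 + b * A1.2 + c = 0 ∧
    a * A2.1 + b * A2.2 + c = 0 ∧
    a * A3.1 + b * A3.2 + c = 0

/-- Triple quad formula. -/
theorem triple_quad_formula {F : Type*} [Field F] (h2 : (2 : F) ≠ 0)
    (A1 A2 A3 : F × F)
    (Q1 Q2 Q3 : F)
    (hQ1 : Q1 = quadrance A2 A3) (hQ2 : Q2 = quadrance A1 A3)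
    (hQ3 : Q3 = quadrance A1 A2) :
    CollinearPts A1 A2 A3 ↔
      (Q1 + Q2 + Q3) ^ 2 = 2 * (Q1 ^ 2 + Q2 ^ 2 + Q3 ^ 2) := by
  obtain ⟨x1, y1⟩ := A1
  obtain ⟨x2, y2⟩ := A2
  obtain ⟨x3, y3⟩ := A3
  subst hQ1 hQ2 hQ3
  simp only [quadrance, CollinearPts]
  set d : F := x1 * (y2 - y3) + x2 * (y3 - y1) + x3 * (y1 - y2) with hd
  constructor
  · rintro ⟨a, b, c, hab, h1, h2', h3⟩
    have had : a * d = 0 := by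
      linear_combination (y2 - y3) * h1 + (y3 - y1) * h2' + (y1 - y2) * h3
    have hbd : b * d = 0 := by
      linear_combination (x3 - x2) * h1 + (x1 - x3) * h2' + (x2 - x1) * h3
    have hdz : d = 0 := by
      by_cases ha : a = 0
      · have hb : b ≠ 0 := fun hb => hab ⟨ha, hb⟩
        exact (mul_eq_zero.mp hbd).resolve_left hb
      · exact (mul_eq_zero.mp had).resolve_left ha
    linear_combination (4 * d) * hdz
  · intro h
    have hd2 : (2 : F) * 2 * (d * d) = 0 := by linear_combination h
    have hdz : d = 0 := by
      rcases mul_eq_zero.mp hd2 with h' | h'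
      · exact absurd (mul_eq_zero.mp h') (by simp [h2])
      · rcases mul_eq_zero.mp h' with h'' | h'' <;> exact h''
    by_cases h12 : x1 = x2 ∧ y1 = y2
    · obtain ⟨hx, hy⟩ := h12
      by_cases h13 : x1 = x3 ∧ y1 = y3
      · obtain ⟨hx', hy'⟩ := h13
        exact ⟨1, 0, -x1, by simp, by simp, by simp [← hx], by simp [← hx']⟩
      · refine ⟨y1 - y3, x3 - x1, x1 * y3 - x3 * y1, ?_, by ring, ?_, by ring⟩
        · rintro ⟨ha, hb⟩
          exact h13 ⟨(sub_eq_zero.mp hb).symm, sub_eq_zero.mp ha⟩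
        · rw [← hx, ← hy]; ring
    · refine ⟨y1 - y2, x2 - x1, x1 * y2 - x2 * y1, ?_, by ring, by ring, ?_⟩
      · rintro ⟨ha, hb⟩
        exact h12 ⟨(sub_eq_zero.mp hb).symm, sub_eq_zero.mp ha⟩
      · linear_combination hdz
end

section
/- For three distinct points A1, A2, A3 in F² over a field F of characteristic ≠ 2, the lines A1A3 and A2A3 are perpendicular if and only if Q(A2,A3) + Q(A1,A3) = Q(A1,A2) (Pythagoras' theorem in universal geometry). -/
/-- The line `⟨a : b : c⟩` through two distinct points. -/
def lineThrough {F : Type*} [Field F] (A B : F × F) : F × F × F :=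
  (A.2 - B.2, B.1 - A.1, A.1 * B.2 - B.1 * A.2)

/-- Lines `⟨a1:b1:c1⟩` and `⟨a2:b2:c2⟩` are perpendicular when `a1*a2 + b1*b2 = 0`. -/
def Perp {F : Type*} [Field F] (l m : F × F × F) : Prop :=
  l.1 * m.1 + l.2.1 * m.2.1 = 0

/-- Pythagoras' theorem in universal geometry. -/
theorem pythagoras {F : Type*} [Field F] (h2 : (2 : F) ≠ 0)
    (A1 A2 A3 : F × F) (h12 : A1 ≠ A2) (h13 : A1 ≠ A3) (h23 : A2 ≠ A3) :
    Perp (lineThrough A1 A3) (lineThrough A2 A3) ↔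
      quadrance A2 A3 + quadrance A1 A3 = quadrance A1 A2 := by
  simp only [Perp, lineThrough, quadrance]
  constructor
  · intro h; linear_combination (2 : F) * h
  · intro h
    apply mul_left_cancel₀ h2
    rw [mul_zero]
    linear_combination h
end

section
/- For a non-null triangle A1A2A3 in F² over a field F of characteristic ≠ 2, with quadrances Q1, Q2, Q3 and spreads s1, s2, s3 (the spread si being at vertex Ai), the spread law holds: s1·Q2 = s2·Q1, s2·Q3 = s3·Q2, and s1·Q3 = s3·Q1. -/
/-- A line `⟨a : b : c⟩` is null when `a^2 + b^2 = 0`. -/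
def IsNullLine {F : Type*} [Field F] (l : F × F × F) : Prop :=
  l.1 ^ 2 + l.2.1 ^ 2 = 0

/-- The spread between two (non-null) lines. -/
def spread {F : Type*} [Field F] (l m : F × F × F) : F :=
  (l.1 * m.2.1 - m.1 * l.2.1) ^ 2 /
    ((l.1 ^ 2 + l.2.1 ^ 2) * (m.1 ^ 2 + m.2.1 ^ 2))

/-- The spread law for a non-null triangle. -/
theorem spread_law {F : Type*} [Field F] (h2 : (2 : F) ≠ 0)
    (A1 A2 A3 : F × F) (hnc : ¬ CollinearPts A1 A2 A3)
    (hn1 : ¬ IsNullLine (lineThrough A2 A3))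
    (hn2 : ¬ IsNullLine (lineThrough A1 A3))
    (hn3 : ¬ IsNullLine (lineThrough A1 A2))
    (Q1 Q2 Q3 s1 s2 s3 : F)
    (hQ1 : Q1 = quadrance A2 A3) (hQ2 : Q2 = quadrance A1 A3)
    (hQ3 : Q3 = quadrance A1 A2)
    (hs1 : s1 = spread (lineThrough A1 A2) (lineThrough A1 A3))
    (hs2 : s2 = spread (lineThrough A2 A1) (lineThrough A2 A3))
    (hs3 : s3 = spread (lineThrough A3 A1) (lineThrough A3 A2)) :
    s1 * Q2 = s2 * Q1 ∧ s2 * Q3 = s3 * Q2 ∧ s1 * Q3 = s3 * Q1 := by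
  obtain ⟨x1, y1⟩ := A1
  obtain ⟨x2, y2⟩ := A2
  obtain ⟨x3, y3⟩ := A3
  simp only [IsNullLine, lineThrough, quadrance, spread] at *
  set d : F := x1 * (y2 - y3) + x2 * (y3 - y1) + x3 * (y1 - y2) with hd
  have hq1 : (x3 - x2) ^ 2 + (y3 - y2) ^ 2 ≠ 0 := fun h => hn1 (by linear_combination h)
  have hq2 : (x3 - x1) ^ 2 + (y3 - y1) ^ 2 ≠ 0 := fun h => hn2 (by linear_combination h)
  have hq3 : (x2 - x1) ^ 2 + (y2 - y1) ^ 2 ≠ 0 := fun h => hn3 (by linear_combination h)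
  have e1 : s1 = d ^ 2 / (((x2 - x1) ^ 2 + (y2 - y1) ^ 2) * ((x3 - x1) ^ 2 + (y3 - y1) ^ 2)) := by
    rw [hs1]; congr 1 <;> ring
  have e2 : s2 = d ^ 2 / (((x2 - x1) ^ 2 + (y2 - y1) ^ 2) * ((x3 - x2) ^ 2 + (y3 - y2) ^ 2)) := by
    rw [hs2]; congr 1 <;> ring
  have e3 : s3 = d ^ 2 / (((x3 - x1) ^ 2 + (y3 - y1) ^ 2) * ((x3 - x2) ^ 2 + (y3 - y2) ^ 2)) := by
    rw [hs3]; congr 1 <;> ring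
  subst hQ1 hQ2 hQ3
  subst e1 e2 e3
  refine ⟨?_, ?_, ?_⟩ <;> field_simp <;> ring
end

section
/- For a non-null triangle A1A2A3 in F² over a field F of characteristic ≠ 2, with quadrances Q1, Q2, Q3 and cross c3 = 1 - s3 where s3 is the spread at vertex A3, the cross law holds: (Q1+Q2-Q3)² = 4·Q1·Q2·c3. -/
/-- The cross law for a non-null triangle. -/
theorem cross_law {F : Type*} [Field F] (h2 : (2 : F) ≠ 0)
    (A1 A2 A3 : F × F) (hnc : ¬ CollinearPts A1 A2 A3)
    (hn1 : ¬ IsNullLine (lineThrough A2 A3))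
    (hn2 : ¬ IsNullLine (lineThrough A1 A3))
    (hn3 : ¬ IsNullLine (lineThrough A1 A2))
    (Q1 Q2 Q3 s3 c3 : F)
    (hQ1 : Q1 = quadrance A2 A3) (hQ2 : Q2 = quadrance A1 A3)
    (hQ3 : Q3 = quadrance A1 A2)
    (hs3 : s3 = spread (lineThrough A3 A1) (lineThrough A3 A2))
    (hc3 : c3 = 1 - s3) :
    (Q1 + Q2 - Q3) ^ 2 = 4 * Q1 * Q2 * c3 := by
  obtain ⟨x1, y1⟩ := A1
  obtain ⟨x2, y2⟩ := A2
  obtain ⟨x3, y3⟩ := A3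
  simp only [quadrance, spread, lineThrough, IsNullLine] at *
  subst hQ1 hQ2 hQ3 hs3 hc3
  have hd1 : (x3 - x2) ^ 2 + (y3 - y2) ^ 2 ≠ 0 := by
    intro h; apply hn1; linear_combination h
  have hd1' : (y3 - y2) ^ 2 + (x2 - x3) ^ 2 ≠ 0 := by
    intro h; apply hn1; linear_combination h
  have hd2' : (y3 - y1) ^ 2 + (x1 - x3) ^ 2 ≠ 0 := by
    intro h; apply hn2; linear_combination h
  field_simp [hd1', hd2']
  ring
end

section
/- For a non-null triangle A1A2A3 in F² over a field F of characteristic ≠ 2, the three spreads s1, s2, s3 satisfy the triple spread formula: (s1+s2+s3)² = 2(s1²+s2²+s3²) + 4·s1·s2·s3. -/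
private lemma tsf_key {F : Type*} [Field F] (q1 q2 q3 d s1 s2 s3 : F)
    (h1 : q1 ≠ 0) (h2 : q2 ≠ 0) (h3 : q3 ≠ 0)
    (hd : 4 * d ^ 2 = 4 * q2 * q3 - (q2 + q3 - q1) ^ 2)
    (hs1 : s1 * (q2 * q3) = d ^ 2) (hs2 : s2 * (q1 * q3) = d ^ 2)
    (hs3 : s3 * (q1 * q2) = d ^ 2) :
    (s1 + s2 + s3) ^ 2 = 2 * (s1 ^ 2 + s2 ^ 2 + s3 ^ 2) + 4 * s1 * s2 * s3 := by
  have hq : (q1 * q2 * q3) ^ 3 ≠ 0 := pow_ne_zero _ (mul_ne_zero (mul_ne_zero h1 h2) h3)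
  apply mul_right_cancel₀ hq
  have k1 : s1 * (q1 * q2 * q3) = d ^ 2 * q1 := by linear_combination q1 * hs1
  have k2 : s2 * (q1 * q2 * q3) = d ^ 2 * q2 := by linear_combination q2 * hs2
  have k3 : s3 * (q1 * q2 * q3) = d ^ 2 * q3 := by linear_combination q3 * hs3
  calc (s1 + s2 + s3) ^ 2 * (q1 * q2 * q3) ^ 3
      = (s1 * (q1*q2*q3) + s2 * (q1*q2*q3) + s3 * (q1*q2*q3)) ^ 2 * (q1*q2*q3) := by ring
    _ = (d^2*q1 + d^2*q2 + d^2*q3) ^ 2 * (q1*q2*q3) := by rw [k1, k2, k3]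
    _ = (2*((d^2*q1)^2 + (d^2*q2)^2 + (d^2*q3)^2))*(q1*q2*q3)
          + 4*((d^2*q1)*(d^2*q2)*(d^2*q3)) := by
        linear_combination (-(d^4*q1*q2*q3)) * hd
    _ = (2*((s1*(q1*q2*q3))^2 + (s2*(q1*q2*q3))^2 + (s3*(q1*q2*q3))^2))*(q1*q2*q3)
          + 4*((s1*(q1*q2*q3))*(s2*(q1*q2*q3))*(s3*(q1*q2*q3))) := by rw [k1, k2, k3]
    _ = (2 * (s1 ^ 2 + s2 ^ 2 + s3 ^ 2) + 4 * s1 * s2 * s3) * (q1 * q2 * q3) ^ 3 := by ring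

/-- The triple spread formula for a non-null triangle. -/
theorem triple_spread_formula {F : Type*} [Field F] (h2 : (2 : F) ≠ 0)
    (A1 A2 A3 : F × F) (hnc : ¬ CollinearPts A1 A2 A3)
    (hn1 : ¬ IsNullLine (lineThrough A2 A3))
    (hn2 : ¬ IsNullLine (lineThrough A1 A3))
    (hn3 : ¬ IsNullLine (lineThrough A1 A2))
    (s1 s2 s3 : F)
    (hs1 : s1 = spread (lineThrough A1 A2) (lineThrough A1 A3))
    (hs2 : s2 = spread (lineThrough A2 A1) (lineThrough A2 A3))
    (hs3 : s3 = spread (lineThrough A3 A1) (lineThrough A3 A2)) :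
    (s1 + s2 + s3) ^ 2 = 2 * (s1 ^ 2 + s2 ^ 2 + s3 ^ 2) + 4 * s1 * s2 * s3 := by
  obtain ⟨x1, y1⟩ := A1
  obtain ⟨x2, y2⟩ := A2
  obtain ⟨x3, y3⟩ := A3
  simp only [spread, lineThrough, IsNullLine] at *
  have ha : (y2 - y3) ^ 2 + (x3 - x2) ^ 2 ≠ 0 := hn1
  have hb : (y1 - y3) ^ 2 + (x3 - x1) ^ 2 ≠ 0 := hn2
  have hc : (y1 - y2) ^ 2 + (x2 - x1) ^ 2 ≠ 0 := hn3
  have hb' : (y3 - y1) ^ 2 + (x1 - x3) ^ 2 ≠ 0 := fun h => hb (by linear_combination h)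
  have hc' : (y2 - y1) ^ 2 + (x1 - x2) ^ 2 ≠ 0 := fun h => hc (by linear_combination h)
  have ha' : (y3 - y2) ^ 2 + (x2 - x3) ^ 2 ≠ 0 := fun h => ha (by linear_combination h)
  have e1 : s1 * (((y1 - y2) ^ 2 + (x2 - x1) ^ 2) * ((y1 - y3) ^ 2 + (x3 - x1) ^ 2))
      = ((y1 - y2) * (x3 - x1) - (y1 - y3) * (x2 - x1)) ^ 2 := by
    rw [hs1]; exact div_mul_cancel₀ _ (mul_ne_zero hc hb)
  have e2 : s2 * (((y2 - y1) ^ 2 + (x1 - x2) ^ 2) * ((y2 - y3) ^ 2 + (x3 - x2) ^ 2))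
      = ((y2 - y1) * (x3 - x2) - (y2 - y3) * (x1 - x2)) ^ 2 := by
    rw [hs2]; exact div_mul_cancel₀ _ (mul_ne_zero hc' ha)
  have e3 : s3 * (((y3 - y1) ^ 2 + (x1 - x3) ^ 2) * ((y3 - y2) ^ 2 + (x2 - x3) ^ 2))
      = ((y3 - y1) * (x2 - x3) - (y3 - y2) * (x1 - x3)) ^ 2 := by
    rw [hs3]; exact div_mul_cancel₀ _ (mul_ne_zero hb' ha')
  exact tsf_key ((y2 - y3) ^ 2 + (x3 - x2) ^ 2) ((y1 - y3) ^ 2 + (x3 - x1) ^ 2)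
      ((y1 - y2) ^ 2 + (x2 - x1) ^ 2) ((x2 - x1) * (y3 - y1) - (x3 - x1) * (y2 - y1))
      s1 s2 s3 ha hb hc (by ring)
      (by linear_combination e1) (by linear_combination e2) (by linear_combination e3)
end

section
/- For any two non-null lines l1, l2 in F² over a field of characteristic ≠ 2, the spread s = s(l1,l2) satisfies that s(1-s) is a square in F. -/
/-- For any two non-null lines, `s * (1 - s)` is a square, where `s` is the spread. -/
theorem spread_number {F : Type*} [Field F] (h2 : (2 : F) ≠ 0)
    (l m : F × F × F) (hl : ¬ IsNullLine l) (hm : ¬ IsNullLine m) :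
    ∃ r : F, spread l m * (1 - spread l m) = r ^ 2 := by
  simp only [IsNullLine] at hl hm
  refine ⟨(l.1 * m.2.1 - m.1 * l.2.1) * (l.1 * m.1 + l.2.1 * m.2.1) /
    ((l.1 ^ 2 + l.2.1 ^ 2) * (m.1 ^ 2 + m.2.1 ^ 2)), ?_⟩
  unfold spread
  field_simp
  ring
end

section
/- Reflection in a non-null line preserves quadrance: if l is a non-null line in F² and A, B are points, then Q(σ_l(A), σ_l(B)) = Q(A,B). -/
/-- Reflection of the point `(x, y)` in the non-null line `⟨a : b : c⟩`. -/
def reflectPt {F : Type*} [Field F] (l : F × F × F) (A : F × F) : F × F :=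
  (((l.2.1 ^ 2 - l.1 ^ 2) * A.1 - 2 * l.1 * l.2.1 * A.2 - 2 * l.1 * l.2.2) /
      (l.1 ^ 2 + l.2.1 ^ 2),
   (-(2 * l.1 * l.2.1) * A.1 + (l.1 ^ 2 - l.2.1 ^ 2) * A.2 - 2 * l.2.1 * l.2.2) /
      (l.1 ^ 2 + l.2.1 ^ 2))

/-- Reflection of the line `⟨a1 : b1 : c1⟩` in the non-null line `⟨a : b : c⟩`. -/
def reflectLine {F : Type*} [Field F] (l m : F × F × F) : F × F × F :=
  ((l.1 ^ 2 - l.2.1 ^ 2) * m.1 + 2 * l.1 * l.2.1 * m.2.1,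
   2 * l.1 * l.2.1 * m.1 - (l.1 ^ 2 - l.2.1 ^ 2) * m.2.1,
   2 * l.1 * l.2.2 * m.1 + 2 * l.2.1 * l.2.2 * m.2.1 - (l.1 ^ 2 + l.2.1 ^ 2) * m.2.2)

/-- Reflection in a non-null line preserves quadrance. -/
theorem reflection_preserves_quadrance {F : Type*} [Field F] (h2 : (2 : F) ≠ 0)
    (l : F × F × F) (hl : ¬ IsNullLine l) (A B : F × F) :
    quadrance (reflectPt l A) (reflectPt l B) = quadrance A B := by
  have h : l.1 ^ 2 + l.2.1 ^ 2 ≠ 0 := hl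
  simp only [quadrance, reflectPt]
  field_simp
  ring
end

section
/- Reflection in a non-null line preserves spread: if l is a non-null line and m1, m2 are non-null lines whose images Σ_l(m1), Σ_l(m2) under reflection in l are also non-null, then s(Σ_l(m1), Σ_l(m2)) = s(m1, m2). -/
/-- Reflection in a non-null line preserves the spread between non-null lines. -/
theorem reflection_preserves_spread {F : Type*} [Field F] (h2 : (2 : F) ≠ 0)
    (l m1 m2 : F × F × F) (hl : ¬ IsNullLine l)
    (hm1 : ¬ IsNullLine m1) (hm2 : ¬ IsNullLine m2)
    (hm1' : ¬ IsNullLine (reflectLine l m1)) (hm2' : ¬ IsNullLine (reflectLine l m2)) :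
    spread (reflectLine l m1) (reflectLine l m2) = spread m1 m2 := by
  obtain ⟨a, b, c⟩ := l
  obtain ⟨a1, b1, c1⟩ := m1
  obtain ⟨a2, b2, c2⟩ := m2
  simp only [IsNullLine, reflectLine, spread] at *
  rw [div_eq_div_iff (mul_ne_zero hm1' hm2') (mul_ne_zero hm1 hm2)]
  ring
end

section
/- Let F be a field in which -3 is not a square. Then any two tangent conics of the affine cubic y² = ax³ + bx + c at distinct points of the curve are either identical or disjoint. Specifically, the tangent conics at points (x0,y0) and (x1,y1) on the curve, given by y² - 3ax0·x² + (3ax0² - b)x - ax0³ - c = 0 and the analogous equation with x1, have no common point in F² when x0 ≠ x1. -/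
/-- Tangent conics of `y² = ax³ + bx + c` at distinct points are disjoint when
`-3` is not a square in the field. -/
theorem tangent_conics_disjoint {F : Type*} [Field F]
    (h2 : (2 : F) ≠ 0) (h3 : (3 : F) ≠ 0)
    (hsq : ¬ ∃ r : F, r ^ 2 = -3)
    (a b c : F) (ha : a ≠ 0) (x0 y0 x1 y1 : F)
    (h0 : y0 ^ 2 = a * x0 ^ 3 + b * x0 + c)
    (h1 : y1 ^ 2 = a * x1 ^ 3 + b * x1 + c)
    (hne : x0 ≠ x1) :
    ¬ ∃ x y : F,
      y ^ 2 - 3 * a * x0 * x ^ 2 + (3 * a * x0 ^ 2 - b) * x - a * x0 ^ 3 - c = 0 ∧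
      y ^ 2 - 3 * a * x1 * x ^ 2 + (3 * a * x1 ^ 2 - b) * x - a * x1 ^ 3 - c = 0 := by
  rintro ⟨x, y, e0, e1⟩
  have hd : x0 - x1 ≠ 0 := sub_ne_zero.mpr hne
  have key : a * (x0 - x1) * (3 * x ^ 2 - 3 * (x0 + x1) * x + (x0 ^ 2 + x0 * x1 + x1 ^ 2)) = 0 := by
    linear_combination e1 - e0
  have hq : 3 * x ^ 2 - 3 * (x0 + x1) * x + (x0 ^ 2 + x0 * x1 + x1 ^ 2) = 0 :=
    (mul_eq_zero.mp key).resolve_left (mul_ne_zero ha hd)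
  exact hsq ⟨(6 * x - 3 * (x0 + x1)) / (x0 - x1), by
    field_simp
    linear_combination 12 * hq⟩
end
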